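/- Let w₁, ..., w_n be i.i.d. non-negative integer-valued random variables, let α ∈ (0,1) with αn ∈ ℕ, and let W = |{i + wᵢ : 1 ≤ i ≤ n}|. Then P(W = αn) ≤ C(n, αn)·α^n ≤ (α/(1−α))^{n(1−α)}. -/

import Mathlib

open MeasureTheory ProbabilityTheory

/-- For i.i.d. nonnegative integer random variables w₁,...,w_n and
W = |{i + wᵢ}|, P(W = αn) ≤ C(n,αn) α^n ≤ (α/(1-α))^{n(1-α)}. -/
theorem stmt5 {Ω : Type*} [MeasureSpace Ω] [IsProbabilityMeasure (ℙ : Measure Ω)]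
    (n : ℕ) (hn : 0 < n) (w : Fin n → Ω → ℕ)
    (hmeas : ∀ i, Measurable (w i))
    (hindep : iIndepFun w ℙ)
    (hident : ∀ i j, Measure.map (w i) ℙ = Measure.map (w j) ℙ)
    (α : ℝ) (hα : α ∈ Set.Ioo (0:ℝ) 1) (k : ℕ) (hk : (k : ℝ) = α * n) :
    (ℙ {ω | (Finset.univ.image (fun i : Fin n => (i : ℕ) + 1 + w i ω)).card = k}).toReal
      ≤ (n.choose k : ℝ) * α ^ n ∧
    (n.choose k : ℝ) * α ^ n ≤ (α / (1 - α)) ^ ((n : ℝ) * (1 - α)) := by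
  classical
  obtain ⟨hα0, hα1⟩ := hα
  haveI : NeZero n := ⟨hn.ne'⟩
  have hn0 : (0:ℝ) < n := by exact_mod_cast hn
  have hkn : k ≤ n := by
    have : (k:ℝ) ≤ n := by rw [hk]; nlinarith
    exact_mod_cast this
  have hαkn : α = (k:ℝ)/(n:ℝ) := by field_simp [hk]; linarith
  constructor
  · -- first inequality
    set 𝒮 : Finset (Finset (ZMod n)) := Finset.powersetCard k Finset.univ with h𝒮
    have card𝒮 : 𝒮.card = n.choose k := by
      rw [h𝒮, Finset.card_powersetCard, Finset.card_univ, ZMod.card]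
    set B : Finset (ZMod n) → Fin n → Set ℕ :=
      fun S i => {x | ((((i:ℕ)+1+x : ℕ)) : ZMod n) ∈ S} with hB
    set E : Finset (ZMod n) → Set Ω := fun S => ⋂ i : Fin n, w i ⁻¹' B S i with hE
    -- inclusion into the union
    have hsub : {ω | (Finset.univ.image (fun i : Fin n => (i : ℕ) + 1 + w i ω)).card = k}
        ⊆ ⋃ S ∈ 𝒮, E S := by
      intro ω hω
      simp only [Set.mem_setOf_eq] at hω
      set V' := (Finset.univ.image fun i : Fin n => (i : ℕ) + 1 + w i ω).image
        (fun m : ℕ => (m : ZMod n)) with hV'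
      have hV'card : V'.card ≤ k := by
        rw [hV']
        exact le_trans Finset.card_image_le (le_of_eq hω)
      obtain ⟨S, hS1, hS2, hS3⟩ := Finset.exists_subsuperset_card_eq (Finset.subset_univ V')
        hV'card (by rw [Finset.card_univ, ZMod.card]; exact hkn)
      refine Set.mem_biUnion (Finset.mem_powersetCard.2 ⟨hS2, hS3⟩) ?_
      refine Set.mem_iInter.2 fun i => ?_
      refine hS1 ?_
      rw [hV']
      exact Finset.mem_image_of_mem _ (Finset.mem_image_of_mem _ (Finset.mem_univ i))
    -- independence: product formula
    have hEprod : ∀ S, ℙ (E S) = ∏ i : Fin n, ℙ (w i ⁻¹' B S i) := by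
      intro S
      exact hindep.meas_iInter (fun i => ⟨B S i, MeasurableSet.of_discrete, rfl⟩)
    -- sum of the probabilities equals k
    have hQsum : ∀ S ∈ 𝒮, ∑ i : Fin n, ℙ (w i ⁻¹' B S i) = (k : ENNReal) := by
      intro S hS
      have hScard : S.card = k := (Finset.mem_powersetCard.1 hS).2
      set i0 : Fin n := ⟨0, hn⟩ with hi0
      set μ := Measure.map (w i0) ℙ with hμ
      haveI : IsProbabilityMeasure μ := Measure.isProbabilityMeasure_map (hmeas i0).aemeasurable
      have h1 : ∀ i, ℙ (w i ⁻¹' B S i) = μ (B S i) := by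
        intro i
        rw [hμ, ← hident i i0, Measure.map_apply (hmeas i) MeasurableSet.of_discrete]
      have h2 : ∀ i : Fin n, μ (B S i) = ∫⁻ x, (B S i).indicator 1 x ∂μ := fun i =>
        (lintegral_indicator_one MeasurableSet.of_discrete).symm
      have h3 : ∀ x : ℕ, ∑ i : Fin n, (B S i).indicator (1 : ℕ → ENNReal) x = (k:ENNReal) := by
        intro x
        have hcard : (Finset.univ.filter (fun i : Fin n => x ∈ B S i)).card = S.card := by
          apply Finset.card_nbij (fun i : Fin n => ((((i:ℕ)+1+x : ℕ)) : ZMod n))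
          · intro a ha
            exact (Finset.mem_filter.1 ha).2
          · intro a ha b hb hab
            simp only [Finset.coe_filter, Set.mem_setOf_eq] at ha hb
            have hab' : ((a:ℕ) : ZMod n) = ((b:ℕ) : ZMod n) := by
              push_cast at hab
              have h := add_right_cancel hab
              exact add_right_cancel h
            have := congrArg ZMod.val hab'
            rw [ZMod.val_cast_of_lt a.isLt, ZMod.val_cast_of_lt b.isLt] at this
            exact Fin.ext this
          · intro s hs
            have hval : ((((s - (((1+x : ℕ)) : ZMod n)).val + 1 + x : ℕ)) : ZMod n) = s := by
              push_cast
              rw [ZMod.natCast_rightInverse _]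
              ring
            refine ⟨⟨(s - (((1+x : ℕ)) : ZMod n)).val, ZMod.val_lt _⟩, ?_, hval⟩
            refine Finset.mem_filter.2 ⟨Finset.mem_univ _, ?_⟩
            show ((((s - (((1+x : ℕ)) : ZMod n)).val + 1 + x : ℕ)) : ZMod n) ∈ S
            rw [hval]
            exact hs
        calc ∑ i : Fin n, (B S i).indicator (1 : ℕ → ENNReal) x
            = ∑ i : Fin n, (if x ∈ B S i then (1:ENNReal) else 0) := by
              refine Finset.sum_congr rfl fun i _ => ?_
              rw [Set.indicator_apply]; rfl
          _ = ((Finset.univ.filter (fun i : Fin n => x ∈ B S i)).card : ENNReal) := by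
              rw [Finset.sum_boole]
          _ = (k : ENNReal) := by rw [hcard, hScard]
      calc ∑ i : Fin n, ℙ (w i ⁻¹' B S i)
          = ∑ i : Fin n, ∫⁻ x, (B S i).indicator 1 x ∂μ := by
            refine Finset.sum_congr rfl fun i _ => ?_
            rw [h1 i, h2 i]
        _ = ∫⁻ x, ∑ i : Fin n, (B S i).indicator 1 x ∂μ := by
            rw [lintegral_finset_sum]
            exact fun i _ => measurable_const.indicator MeasurableSet.of_discrete
        _ = ∫⁻ _, (k:ENNReal) ∂μ := by
            congr 1
            funext x
            exact h3 x
        _ = (k:ENNReal) := by simp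
    -- per-S bound via AM-GM
    have hperS : ∀ S ∈ 𝒮, (ℙ (E S)).toReal ≤ α ^ n := by
      intro S hS
      rw [hEprod S, ENNReal.toReal_prod]
      set q : Fin n → ℝ := fun i => (ℙ (w i ⁻¹' B S i)).toReal with hq
      have hq0 : ∀ i, 0 ≤ q i := fun i => ENNReal.toReal_nonneg
      have hqsum : ∑ i, q i = (k:ℝ) := by
        rw [hq]
        rw [← ENNReal.toReal_sum (fun i _ => measure_ne_top _ _)]
        rw [hQsum S hS]
        simp
      have hAM := Real.geom_mean_le_arith_mean_weighted Finset.univ (fun _ => 1/(n:ℝ)) q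
          (fun _ _ => by positivity) (by rw [Finset.sum_const, Finset.card_univ, Fintype.card_fin, nsmul_eq_mul]; field_simp) (fun i _ => hq0 i)
      have hrhs : ∑ i : Fin n, (1/(n:ℝ)) * q i = α := by
        rw [← Finset.mul_sum, hqsum, hαkn]; ring
      have hgm : ∏ i : Fin n, q i ^ (1/(n:ℝ)) ≤ α := by
        rw [← hrhs]; exact hAM
      have h1 : ∏ i : Fin n, q i = (∏ i : Fin n, q i ^ (1/(n:ℝ)))^(n:ℕ) := by
        rw [← Finset.prod_pow]
        refine Finset.prod_congr rfl fun i _ => ?_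
        rw [← Real.rpow_natCast (q i ^ (1/(n:ℝ))) n, ← Real.rpow_mul (hq0 i), one_div,
          inv_mul_cancel₀ (by positivity), Real.rpow_one]
      rw [h1]
      exact pow_le_pow_left₀ (Finset.prod_nonneg fun i _ => Real.rpow_nonneg (hq0 i) _) hgm n
    -- assemble
    have hfin : ∑ S ∈ 𝒮, ℙ (E S) ≠ ⊤ := by
      refine (lt_of_le_of_lt (Finset.sum_le_sum fun S _ => prob_le_one) ?_).ne
      simp only [Finset.sum_const, nsmul_eq_mul, mul_one]
      exact ENNReal.natCast_lt_top _
    calc (ℙ {ω | (Finset.univ.image (fun i : Fin n => (i : ℕ) + 1 + w i ω)).card = k}).toReal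
        ≤ (∑ S ∈ 𝒮, ℙ (E S)).toReal := by
          refine ENNReal.toReal_mono hfin ?_
          exact le_trans (measure_mono hsub) (measure_biUnion_finset_le _ _)
      _ = ∑ S ∈ 𝒮, (ℙ (E S)).toReal := ENNReal.toReal_sum (fun _ _ => measure_ne_top _ _)
      _ ≤ ∑ _S ∈ 𝒮, α ^ n := Finset.sum_le_sum hperS
      _ = (n.choose k : ℝ) * α ^ n := by
          rw [Finset.sum_const, card𝒮, nsmul_eq_mul]
  · -- second inequality
    have h1α : (0:ℝ) < 1 - α := by linarith
    set m := n - k with hm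
    have hnm : n = k + m := (Nat.add_sub_cancel' hkn).symm
    have hexp : (n:ℝ) * (1 - α) = (m:ℕ) := by
      have : ((m : ℕ):ℝ) = (n:ℝ) - k := by
        rw [hm, Nat.cast_sub hkn]
      rw [this, hk]; ring
    rw [hexp, Real.rpow_natCast]
    have hbinom : (n.choose k : ℝ) * (α^k * (1-α)^m) ≤ 1 := by
      have hterm : α^k * (1-α)^(n-k) * (n.choose k : ℝ)
          ≤ ∑ j ∈ Finset.range (n+1), α^j * (1-α)^(n-j) * (n.choose j : ℝ) := by
        exact Finset.single_le_sum (f := fun j => α^j * (1-α)^(n-j) * (n.choose j : ℝ)) (fun j _ => by positivity)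
          (Finset.mem_range.2 (Nat.lt_succ_of_le hkn))
      have hsum : ∑ j ∈ Finset.range (n+1), α^j * (1-α)^(n-j) * (n.choose j : ℝ) = 1 := by
        rw [← add_pow]
        norm_num
      calc (n.choose k : ℝ) * (α^k * (1-α)^m) = α^k * (1-α)^(n-k) * (n.choose k : ℝ) := by
            rw [hm]; ring
        _ ≤ 1 := le_trans hterm (le_of_eq hsum)
    rw [div_pow, le_div_iff₀ (by positivity)]
    have hre : (n.choose k : ℝ) * α ^ n * (1-α)^m = ((n.choose k : ℝ) * (α^k * (1-α)^m)) * α^m := by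
      rw [hnm, pow_add]; ring
    rw [hre]
    calc ((n.choose k : ℝ) * (α^k * (1-α)^m)) * α^m ≤ 1 * α^m := by
          exact mul_le_mul_of_nonneg_right hbinom (by positivity)
      _ = α^m := one_mul _
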